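/- Let δ ≥ 0 and Δ ≥ 0. Let X be a proper metric space and G a group acting on X by isometries such that the action is metrically proper: for every compact subset C of X, the set {g ∈ G : gC ∩ C ≠ ∅} is finite. Let Y be a subset of X whose stabilizer Stab(Y) = {g ∈ G : gY = Y} acts cocompactly on Y, i.e. there is a compact set K ⊆ Y with Stab(Y)·K = Y. Assume that Stab(Y) is closed in G for the profinite topology: for every g ∈ G with g ∉ Stab(Y), there exists a finite-index normal subgroup N of G with g ∉ Stab(Y)·N. Then there exists a finite-index subgroup G' of G containing Stab(Y) such that for every g ∈ G' with g ∉ Stab(Y), one has diam( gY^{+20δ} ∩ Y^{+20δ} ) ≤ Δ. -/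

import Mathlib

open Pointwise

/-- The `A`-neighbourhood `Y^{+A}` of a subset. -/
def nbhd {X : Type*} [MetricSpace X] (A : ℝ) (Y : Set X) : Set X :=
  {x | ∃ y ∈ Y, dist x y ≤ A}

/-- if the stabilizer of `Y` acts cocompactly on `Y` and is
closed in `G` for the profinite topology, and the action of `G` on the proper
space `X` is metrically proper, then some finite-index subgroup `G'` of `G`
containing `Stab(Y)` satisfies: for every `g ∈ G'` outside `Stab(Y)`, the
overlap `gY^{+20δ} ∩ Y^{+20δ}` has diameter at most `Δ`. -/
theorem exists_finiteIndex_subgroup_small_overlap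
    {X : Type*} [MetricSpace X] [ProperSpace X]
    {G : Type*} [Group G] [MulAction G X]
    (hiso : ∀ g : G, Isometry (fun x : X => g • x))
    (hproper : ∀ C : Set X, IsCompact C → Set.Finite {g : G | (g • C) ∩ C ≠ ∅})
    (δ Δ : ℝ) (hδ : 0 ≤ δ) (hΔ : 0 ≤ Δ)
    (Y : Set X)
    (hcocompact : ∃ K : Set X, IsCompact K ∧ K ⊆ Y ∧
      (⋃ g ∈ MulAction.stabilizer G Y, g • K) = Y)
    (hclosed : ∀ g : G, g ∉ MulAction.stabilizer G Y →
      ∃ N : Subgroup G, N.Normal ∧ N.FiniteIndex ∧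
        ∀ h ∈ MulAction.stabilizer G Y, ∀ n ∈ N, g ≠ h * n) :
    ∃ G' : Subgroup G, G'.FiniteIndex ∧ MulAction.stabilizer G Y ≤ G' ∧
      ∀ g ∈ G', g ∉ MulAction.stabilizer G Y →
        EMetric.diam (nbhd (20 * δ) (g • Y) ∩ nbhd (20 * δ) Y) ≤
          ENNReal.ofReal Δ := by
  classical
  obtain ⟨K, hKc, hKY, hKU⟩ := hcocompact
  set S := MulAction.stabilizer G Y with hSdef
  choose N hNnorm hNfin hNne using hclosed
  set C := Metric.cthickening (40 * δ) K with hCdef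
  have hCc : IsCompact C := hKc.cthickening
  have hFfin : Set.Finite {g : G | (g • C) ∩ C ≠ ∅} := hproper C hCc
  set F : Set G := {f : G | ((f • C) ∩ C ≠ ∅) ∧ f ∉ S} with hFdef
  have hFf : F.Finite := hFfin.subset (fun f hf => hf.1)
  haveI : Finite F := hFf.to_subtype
  refine ⟨⨅ f : F, (S ⊔ N f.1 f.2.2), ?_, ?_, ?_⟩
  · exact Subgroup.finiteIndex_iInf fun f =>
      @Subgroup.finiteIndex_of_le _ _ _ _ (hNfin f.1 f.2.2) le_sup_right
  · exact le_iInf fun f => le_sup_left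
  · intro g hg hgS
    suffices hemp : nbhd (20 * δ) (g • Y) ∩ nbhd (20 * δ) Y = ∅ by
      rw [hemp]; exact (Metric.ediam_empty (X := X)).le.trans zero_le
    rw [Set.eq_empty_iff_forall_notMem]
    rintro x ⟨⟨y1, hy1, hd1⟩, ⟨y2, hy2, hd2⟩⟩
    obtain ⟨y1', hy1', rfl⟩ := hy1
    rw [← hKU] at hy1' hy2
    simp only [Set.mem_iUnion] at hy1' hy2
    obtain ⟨s1, hs1, k1mem⟩ := hy1'
    obtain ⟨k1, hk1, rfl⟩ := k1mem
    obtain ⟨s2, hs2, k2mem⟩ := hy2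
    obtain ⟨k2, hk2, rfl⟩ := k2mem
    have hdist : dist (g • (s1 • k1)) (s2 • k2) ≤ 40 * δ := by
      calc dist (g • (s1 • k1)) (s2 • k2)
          ≤ dist (g • (s1 • k1)) x + dist x (s2 • k2) := dist_triangle _ x _
        _ ≤ 20 * δ + 20 * δ := by
            rw [dist_comm (g • (s1 • k1)) x]; exact add_le_add hd1 hd2
        _ = 40 * δ := by ring
    set h : G := s2⁻¹ * g * s1 with hhdef
    have hdist2 : dist (h • k1) k2 ≤ 40 * δ := by
      have heq : h • k1 = s2⁻¹ • (g • (s1 • k1)) := by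
        simp [hhdef, mul_smul]
      have hde := (hiso s2⁻¹).dist_eq (g • (s1 • k1)) (s2 • k2)
      try simp only at hde
      rw [show (s2⁻¹ • (s2 • k2) : X) = k2 from inv_smul_smul s2 k2] at hde
      rw [heq, hde]
      exact hdist
    have hhF : (h • C) ∩ C ≠ ∅ := by
      rw [← Set.nonempty_iff_ne_empty]
      refine ⟨h • k1, ?_, ?_⟩
      · exact Set.smul_mem_smul_set (Metric.self_subset_cthickening K hk1)
      · exact Metric.mem_cthickening_of_dist_le _ k2 _ _ hk2 hdist2
    by_cases hhS : h ∈ S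
    · apply hgS
      have hmem : s2 * h * s1⁻¹ ∈ S := S.mul_mem (S.mul_mem hs2 hhS) (S.inv_mem hs1)
      have heq : s2 * h * s1⁻¹ = g := by rw [hhdef]; group
      rwa [heq] at hmem
    · have hhFmem : h ∈ F := ⟨hhF, hhS⟩
      have hg' : g ∈ S ⊔ N h hhS := Subgroup.mem_iInf.mp hg ⟨h, hhFmem⟩
      haveI := hNnorm h hhS
      rw [← SetLike.mem_coe, Subgroup.mul_normal] at hg'
      obtain ⟨t, ht, n, hn, rfl⟩ := hg'
      have hn' : s1⁻¹ * n * s1 ∈ N h hhS := by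
        have := (hNnorm h hhS).conj_mem n hn s1⁻¹
        simpa using this
      have ht' : s2⁻¹ * t * s1 ∈ S := S.mul_mem (S.mul_mem (S.inv_mem hs2) ht) hs1
      refine hNne h hhS _ ht' _ hn' ?_
      rw [hhdef]; group
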